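/- Let p ∈ (0,1), c ∈ (0,1], and define f(α) := α² p^{2α}/(c + (1−c) p^{α}) and g(α) := f(α)/α for positive integers α. Let α_B be the smallest positive integer maximizing g over the positive integers. If N_q is a positive integer with N_q ≤ α_B, then for every finite list of positive integers α'_1, …, α'_{M'} with α'_1 + ⋯ + α'_{M'} = N_q, one has Σ_{k=1}^{M'} f(α'_k) ≤ N_q² p^{2 N_q}/(c + (1−c) p^{N_q}) = f(N_q); moreover equality is attained by the trivial partition M' = 1, α'_1 = N_q. -/

import Mathlib

/-- Theorem 1 (precision limit), case `N_q ≤ α_B`: for any partition of the total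
query number `N_q` into positive integers, the total quantum Fisher information
`Σ f(α'_k)` is bounded by `f(N_q) = N_q² p^{2N_q}/(c + (1-c) p^{N_q})`, and the
trivial partition attains equality. -/
theorem stmt_0 (p c : ℝ) (hp : p ∈ Set.Ioo (0 : ℝ) 1) (hc : c ∈ Set.Ioc (0 : ℝ) 1)
    (f g : ℕ → ℝ)
    (hf : ∀ α : ℕ, f α = (α : ℝ) ^ 2 * p ^ (2 * α) / (c + (1 - c) * p ^ α))
    (hg : ∀ α : ℕ, g α = f α / (α : ℝ))
    (αB : ℕ) (hαB : 1 ≤ αB)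
    (hmax : ∀ α : ℕ, 1 ≤ α → g α ≤ g αB)
    (hleast : ∀ β : ℕ, 1 ≤ β → β < αB → g β < g αB)
    (Nq : ℕ) (hNq : 1 ≤ Nq) (hNqle : Nq ≤ αB) :
    (∀ L : List ℕ, (∀ a ∈ L, 1 ≤ a) → L.sum = Nq →
      (L.map f).sum ≤ (Nq : ℝ) ^ 2 * p ^ (2 * Nq) / (c + (1 - c) * p ^ Nq)) ∧
    f Nq = (Nq : ℝ) ^ 2 * p ^ (2 * Nq) / (c + (1 - c) * p ^ Nq) ∧
    ([Nq].map f).sum = (Nq : ℝ) ^ 2 * p ^ (2 * Nq) / (c + (1 - c) * p ^ Nq) := by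
  obtain ⟨hp0, hp1⟩ := hp
  obtain ⟨hc0, hc1⟩ := hc
  have hb : (0:ℝ) ≤ 1 - c := by linarith
  have hD : ∀ n : ℕ, 0 < c + (1 - c) * p ^ n := by
    intro n
    have h1 : 0 < p ^ n := pow_pos hp0 n
    nlinarith
  -- simplified formula for g on positive integers
  have hG : ∀ α : ℕ, 1 ≤ α → g α = (α : ℝ) * p ^ (2 * α) / (c + (1 - c) * p ^ α) := by
    intro α hα
    have hα0 : ((α : ℝ)) ≠ 0 := Nat.cast_ne_zero.mpr (by omega)
    rw [hg, hf]
    field_simp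
  have hgpos : ∀ α : ℕ, 1 ≤ α → 0 < g α := by
    intro α hα
    rw [hG α hα]
    have hα0 : (0:ℝ) < (α : ℝ) := by exact_mod_cast hα
    exact div_pos (mul_pos hα0 (pow_pos hp0 _)) (hD α)
  have hfg : ∀ α : ℕ, 1 ≤ α → f α = (α : ℝ) * g α := by
    intro α hα
    have hα0 : ((α : ℝ)) ≠ 0 := Nat.cast_ne_zero.mpr (by omega)
    rw [hg]
    field_simp
  -- discrete log-concavity of g
  have hlc : ∀ α : ℕ, 1 ≤ α → g α * g (α + 2) ≤ g (α + 1) ^ 2 := by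
    intro α hα
    rw [hG α hα, hG (α+1) (by omega), hG (α+2) (by omega)]
    push_cast
    set x := p ^ α with hxdef
    have hx : 0 < x := pow_pos hp0 α
    have e1 : p ^ (α+1) = x * p := by rw [pow_succ]
    have e2 : p ^ (α+2) = x * p * p := by rw [pow_succ, pow_succ]
    have e3 : p ^ (2*α) = x ^ 2 := by rw [two_mul, pow_add]; ring
    have e4 : p ^ (2*(α+1)) = x ^ 2 * p ^ 2 := by
      rw [two_mul, pow_add, e1]; ring
    have e5 : p ^ (2*(α+2)) = x ^ 2 * p ^ 4 := by
      rw [two_mul, pow_add, e2]; ring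
    rw [e1, e2, e3, e4, e5]
    rw [div_mul_div_comm, div_pow, div_le_div_iff₀ (by positivity) (by positivity)]
    set A := (α : ℝ) with hAdef
    have hA0 : (0:ℝ) ≤ A := by positivity
    have h1 : A * (A + 2) ≤ (A + 1) ^ 2 := by nlinarith
    have h2 : (c + (1-c) * (x * p)) ^ 2 ≤ (c + (1-c) * x) * (c + (1-c) * (x * p * p)) := by
      nlinarith [mul_nonneg (mul_nonneg (mul_nonneg hb hc0.le) hx.le) (sq_nonneg (1 - p))]
    have H : A * (A + 2) * ((c + (1-c) * (x * p)) ^ 2)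
        ≤ (A + 1) ^ 2 * ((c + (1-c) * x) * (c + (1-c) * (x * p * p))) := by
      exact mul_le_mul h1 h2 (sq_nonneg _) (by positivity)
    nlinarith [mul_le_mul_of_nonneg_right H (show (0:ℝ) ≤ x ^ 4 * p ^ 4 by positivity)]
  -- once g decreases, it keeps decreasing
  have hdec : ∀ a : ℕ, 1 ≤ a → g (a + 1) < g a → ∀ k : ℕ, g (a + k + 1) < g (a + k) := by
    intro a ha h k
    induction k with
    | zero => simpa using h
    | succ n ih =>
      have hlc' := hlc (a + n) (by omega)
      have hp1' := hgpos (a + n) (by omega)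
      have hp2' := hgpos (a + n + 1) (by omega)
      show g (a + n + 1 + 1) < g (a + n + 1)
      nlinarith [ih]
  -- g is nondecreasing strictly below αB
  have hmono : ∀ a : ℕ, 1 ≤ a → a < αB → g a ≤ g (a + 1) := by
    intro a ha hlt
    by_contra h
    push_neg at h
    have hchain : ∀ k : ℕ, 1 ≤ k → g (a + k) < g a := by
      intro k hk
      induction k with
      | zero => omega
      | succ n ih =>
        rcases Nat.eq_zero_or_pos n with hn | hn
        · subst hn; simpa using h
        · exact lt_trans (hdec a ha h n) (ih hn)
    have h2 := hchain (αB - a) (by omega)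
    rw [show a + (αB - a) = αB by omega] at h2
    exact absurd (hmax a ha) (not_le.mpr h2)
  have hmono2 : ∀ a b : ℕ, 1 ≤ a → a ≤ b → b ≤ αB → g a ≤ g b := by
    intro a b ha hab hb
    induction b, hab using Nat.le_induction with
    | base => exact le_rfl
    | succ n hn ih =>
      exact le_trans (ih (by omega)) (hmono n (by omega) (by omega))
  have hgNq : 0 ≤ g Nq := (hgpos Nq hNq).le
  -- key bound for lists
  have key : ∀ L : List ℕ, (∀ x ∈ L, 1 ≤ x ∧ x ≤ Nq) →
      (L.map f).sum ≤ (L.sum : ℝ) * g Nq := by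
    intro L
    induction L with
    | nil => simp
    | cons a t ih =>
      intro h
      obtain ⟨ha1, ha2⟩ := h a List.mem_cons_self
      have h3 := ih (fun x hx => h x (List.mem_cons_of_mem _ hx))
      have h1 : f a = (a : ℝ) * g a := hfg a ha1
      have h2 : g a ≤ g Nq := hmono2 a Nq ha1 ha2 hNqle
      have ha0 : (0:ℝ) ≤ (a : ℝ) := by positivity
      simp only [List.map_cons, List.sum_cons]
      rw [Nat.cast_add]
      nlinarith [mul_le_mul_of_nonneg_left h2 ha0]
  have hfNq : f Nq = (Nq : ℝ) ^ 2 * p ^ (2 * Nq) / (c + (1 - c) * p ^ Nq) := hf Nq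
  refine ⟨?_, hfNq, by simp [hfNq]⟩
  intro L hL hsum
  have hmem : ∀ x ∈ L, 1 ≤ x ∧ x ≤ Nq := by
    intro x hx
    refine ⟨hL x hx, ?_⟩
    rw [← hsum]
    exact List.single_le_sum (fun y _ => Nat.zero_le y) x hx
  calc (L.map f).sum ≤ (L.sum : ℝ) * g Nq := key L hmem
    _ = (Nq : ℝ) * g Nq := by rw [hsum]
    _ = f Nq := (hfg Nq hNq).symm
    _ = _ := hfNq
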